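/- Suppose the matrices A_1, …, A_M ∈ ℝ^{n×n} have the Kernel Sharing Property, i.e., ker(A_i − I) = ⋂_{j=1}^M ker(A_j − I) for every i. If the difference inclusion generated by A_1, …, A_M is weakly convergent, then it is strongly convergent. -/

import Mathlib

open Matrix Filter

set_option maxHeartbeats 1000000

/-- `w` lies in the unit simplex `W ⊆ ℝ^M`. -/
def InSimplex {M : ℕ} (w : Fin M → ℝ) : Prop :=
  (∀ i, 0 ≤ w i) ∧ ∑ i, w i = 1

/-- The convex combination `A(w) = ∑ᵢ wᵢ Aᵢ`. -/
def Amix {n M : ℕ} (A : Fin M → Matrix (Fin n) (Fin n) ℝ) (w : Fin M → ℝ) :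
    Matrix (Fin n) (Fin n) ℝ :=
  ∑ i, w i • A i

/-- `x` is a solution of the difference inclusion generated by `A₁, …, A_M`. -/
def IsInclusionSolution {n M : ℕ} (A : Fin M → Matrix (Fin n) (Fin n) ℝ)
    (x : ℕ → Fin n → ℝ) : Prop :=
  ∃ w : ℕ → Fin M → ℝ, (∀ k, InSimplex (w k)) ∧
    ∀ k, x (k + 1) = (Amix A (w k)) *ᵥ (x k)

/-- Weak convergence: every solution of the difference inclusion has a limit. -/
def WeaklyConvergent {n M : ℕ} (A : Fin M → Matrix (Fin n) (Fin n) ℝ) : Prop :=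
  ∀ x : ℕ → Fin n → ℝ, IsInclusionSolution A x →
    ∃ xbar : Fin n → ℝ, Tendsto x atTop (nhds xbar)

/-- Strong convergence: every solution converges to a point of `⋂ᵢ ker(Aᵢ − I)`. -/
def StronglyConvergent {n M : ℕ} (A : Fin M → Matrix (Fin n) (Fin n) ℝ) : Prop :=
  ∀ x : ℕ → Fin n → ℝ, IsInclusionSolution A x →
    ∃ xbar : Fin n → ℝ, (∀ i, (A i - 1) *ᵥ xbar = 0) ∧ Tendsto x atTop (nhds xbar)

/- ### Auxiliary lemmas -/

lemma amix_mulVec {n M : ℕ} (A : Fin M → Matrix (Fin n) (Fin n) ℝ) (w : Fin M → ℝ)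
    (y : Fin n → ℝ) : Amix A w *ᵥ y = ∑ i, w i • (A i *ᵥ y) := by
  funext s
  simp only [Amix, Matrix.mulVec, dotProduct, Finset.sum_apply, Matrix.sum_apply,
    Matrix.smul_apply, Pi.smul_apply, smul_eq_mul, Finset.sum_mul]
  rw [Finset.sum_comm]
  exact Finset.sum_congr rfl fun i _ => by
    rw [Finset.mul_sum]; exact Finset.sum_congr rfl fun t _ => by ring

lemma amix_single {n M : ℕ} (A : Fin M → Matrix (Fin n) (Fin n) ℝ) (j : Fin M) :
    Amix A (Pi.single j 1) = A j := by
  unfold Amix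
  rw [Finset.sum_eq_single j]
  · simp
  · intro i _ hij; simp [Pi.single_apply, hij]
  · intro h; exact absurd (Finset.mem_univ j) h

lemma insimplex_single {M : ℕ} (j : Fin M) : InSimplex (Pi.single j (1:ℝ)) := by
  constructor
  · intro i
    rcases eq_or_ne i j with h | h <;> simp [Pi.single_apply, h]
  · simp

lemma mulVec_continuous {n : ℕ} (B : Matrix (Fin n) (Fin n) ℝ) :
    Continuous fun y : Fin n → ℝ => B *ᵥ y := by
  have h := LinearMap.continuous_of_finiteDimensional B.mulVecLin
  have heq : (fun y : Fin n → ℝ => B *ᵥ y) = ⇑B.mulVecLin := by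
    funext y; simp [Matrix.mulVecLin_apply]
  rw [heq]; exact h

lemma simplex_compact {M : ℕ} : IsCompact {v : Fin M → ℝ | InSimplex v} := by
  apply Metric.isCompact_of_isClosed_isBounded
  · have h : {v : Fin M → ℝ | InSimplex v}
        = (⋂ i, {v : Fin M → ℝ | 0 ≤ v i}) ∩ {v | ∑ i, v i = 1} := by
      ext v; simp [InSimplex, Set.mem_iInter]
    rw [h]
    exact IsClosed.inter
      (isClosed_iInter fun i => isClosed_le continuous_const (continuous_apply i))
      (isClosed_eq (continuous_finset_sum _ fun i _ => continuous_apply i) continuous_const)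
  · rw [isBounded_iff_forall_norm_le]
    refine ⟨1, fun v hv => ?_⟩
    rw [pi_norm_le_iff_of_nonneg zero_le_one]
    intro i
    rw [Real.norm_eq_abs, abs_of_nonneg (hv.1 i)]
    calc v i ≤ ∑ j, v j := Finset.single_le_sum (fun j _ => hv.1 j) (Finset.mem_univ i)
      _ = 1 := hv.2

/-- under the Kernel Sharing Property, weak convergence implies
strong convergence. -/
theorem ksp_weak_implies_strong
    (n M : ℕ) (A : Fin M → Matrix (Fin n) (Fin n) ℝ)
    (hKSP : ∀ i, LinearMap.ker (A i - 1).mulVecLin =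
      ⨅ j, LinearMap.ker (A j - 1).mulVecLin)
    (hweak : WeaklyConvergent A) :
    StronglyConvergent A := by
  intro x hx
  obtain ⟨xbar, hxbar⟩ := hweak x hx
  refine ⟨xbar, ?_, hxbar⟩
  obtain ⟨w, hw, hstep⟩ := hx
  -- extract a cluster point `u` of the weights
  obtain ⟨u, huS, ψ, hψ, hwu⟩ := simplex_compact.tendsto_subseq (x := w) (fun k => hw k)
  have hu : InSimplex u := huS
  -- `A(u) xbar = xbar`
  have hcont2 : Continuous fun p : (Fin M → ℝ) × (Fin n → ℝ) => Amix A p.1 *ᵥ p.2 := by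
    have h : (fun p : (Fin M → ℝ) × (Fin n → ℝ) => Amix A p.1 *ᵥ p.2)
        = fun p => ∑ i, p.1 i • (A i *ᵥ p.2) := by
      funext p; rw [amix_mulVec]
    rw [h]
    exact continuous_finset_sum _ fun i _ =>
      ((continuous_apply i).comp continuous_fst).smul
        ((mulVec_continuous (A i)).comp continuous_snd)
  have hfix : Amix A u *ᵥ xbar = xbar := by
    have h1 : Tendsto (fun t => x (ψ t + 1)) atTop (nhds xbar) :=
      hxbar.comp ((tendsto_add_atTop_nat 1).comp hψ.tendsto_atTop)
    have hprod : Tendsto (fun t => (w (ψ t), x (ψ t))) atTop (nhds (u, xbar)) :=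
      hwu.prodMk_nhds (hxbar.comp hψ.tendsto_atTop)
    have h2 : Tendsto (fun t => Amix A (w (ψ t)) *ᵥ x (ψ t)) atTop
        (nhds (Amix A u *ᵥ xbar)) := by
      apply Tendsto.comp (g := fun p : (Fin M → ℝ) × (Fin n → ℝ) => Amix A p.1 *ᵥ p.2)
        (hcont2.tendsto (u, xbar)) hprod
    have h3 : (fun t => x (ψ t + 1)) = fun t => Amix A (w (ψ t)) *ᵥ x (ψ t) :=
      funext fun t => hstep (ψ t)
    exact tendsto_nhds_unique h2 (h3 ▸ h1)
  -- the common kernel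
  set K : Submodule ℝ (Fin n → ℝ) := ⨅ j, LinearMap.ker (A j - 1).mulVecLin with hK
  -- it suffices to show `xbar ∈ K`
  suffices hxbarK : xbar ∈ K by
    intro i
    have h : xbar ∈ LinearMap.ker (A i - 1).mulVecLin := (hKSP i) ▸ hxbarK
    simpa [Matrix.mulVecLin_apply, Matrix.sub_mulVec] using h
  by_contra hxK
  -- members of K are fixed by each A i
  have hKfix : ∀ v ∈ K, ∀ i, A i *ᵥ v = v := by
    intro v hv i
    have h : v ∈ LinearMap.ker (A i - 1).mulVecLin := (hKSP i) ▸ hv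
    have h0 : (A i - 1) *ᵥ v = 0 := by simpa [Matrix.mulVecLin_apply, Matrix.sub_mulVec] using h
    rw [Matrix.sub_mulVec, Matrix.one_mulVec, sub_eq_zero] at h0
    exact h0
  set V₂ : Submodule ℝ (Fin n → ℝ) := LinearMap.range (Amix A u - 1).mulVecLin with hV₂
  -- a fixed vector of `Amix A u` lying in `V₂` must vanish (via weak convergence)
  have hV2fix : ∀ q ∈ V₂, Amix A u *ᵥ q = q → q = 0 := by
    intro q hq hfixq
    obtain ⟨p, hp⟩ := hq
    have hp' : Amix A u *ᵥ p = p + q := by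
      have h : (Amix A u - 1) *ᵥ p = q := by simpa [Matrix.mulVecLin_apply, Matrix.sub_mulVec] using hp
      rw [Matrix.sub_mulVec, Matrix.one_mulVec, sub_eq_iff_eq_add] at h
      rw [h]; abel
    set s : ℕ → Fin n → ℝ := fun k => p + (k : ℝ) • q with hs
    have hsol : IsInclusionSolution A s := by
      refine ⟨fun _ => u, fun _ => hu, fun k => ?_⟩
      show p + ((k + 1 : ℕ) : ℝ) • q = Amix A u *ᵥ (p + (k : ℝ) • q)
      rw [Matrix.mulVec_add, Matrix.mulVec_smul, hp', hfixq]
      push_cast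
      rw [add_smul, one_smul]
      abel
    obtain ⟨L, hL⟩ := hweak s hsol
    have h1 : Tendsto (fun k => s (k + 1) - s k) atTop (nhds (L - L)) :=
      (hL.comp (tendsto_add_atTop_nat 1)).sub hL
    have h2 : (fun k => s (k + 1) - s k) = fun _ => q := by
      funext k
      show (p + ((k + 1 : ℕ) : ℝ) • q) - (p + (k : ℝ) • q) = q
      push_cast
      rw [add_smul, one_smul]
      abel
    rw [h2, sub_self] at h1
    exact tendsto_nhds_unique tendsto_const_nhds h1
  -- xbar is not in K ⊔ V₂
  set W' : Submodule ℝ (Fin n → ℝ) := K ⊔ V₂ with hW'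
  have hxW : xbar ∉ W' := by
    intro hmem
    obtain ⟨κ, hκ, q, hq, hsum⟩ := Submodule.mem_sup.mp hmem
    have hκfix : Amix A u *ᵥ κ = κ := by
      rw [amix_mulVec]
      have h : ∀ i ∈ Finset.univ, u i • (A i *ᵥ κ) = u i • κ := fun i _ => by
        rw [hKfix κ hκ i]
      rw [Finset.sum_congr rfl h, ← Finset.sum_smul, hu.2, one_smul]
    have hqval : q = xbar - κ := by rw [← hsum]; abel
    have hqfix : Amix A u *ᵥ q = q := by
      rw [hqval, Matrix.mulVec_sub, hfix, hκfix]
    have hq0 : q = 0 := hV2fix q hq hqfix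
    apply hxK
    rw [← hsum, hq0, add_zero]
    exact hκ
  -- build a linear functional φ vanishing on W' with φ xbar = 1
  have hmkQ : W'.mkQ xbar ≠ 0 := by
    simpa [Submodule.Quotient.mk_eq_zero] using hxW
  obtain ⟨g, hg⟩ := (LinearMap.toSpanSingleton ℝ _ (W'.mkQ xbar)).exists_leftInverse_of_injective
    (LinearMap.ker_toSpanSingleton ℝ hmkQ)
  set φ : (Fin n → ℝ) →ₗ[ℝ] ℝ := g.comp W'.mkQ with hφ
  have hφxbar : φ xbar = 1 := by
    have h := LinearMap.congr_fun hg 1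
    simpa [hφ, LinearMap.toSpanSingleton_apply] using h
  have hφW : ∀ y ∈ W', φ y = 0 := by
    intro y hy
    have h : W'.mkQ y = 0 := (Submodule.Quotient.mk_eq_zero W').mpr hy
    simp [hφ, LinearMap.comp_apply, h]
  -- φ is invariant under Amix A u
  have hφinv : ∀ y, φ (Amix A u *ᵥ y) = φ y := by
    intro y
    have hmem : Amix A u *ᵥ y - y ∈ W' := by
      apply Submodule.mem_sup_right
      exact ⟨y, by simp [Matrix.mulVecLin_apply, Matrix.sub_mulVec, Matrix.one_mulVec]⟩
    have h := hφW _ hmem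
    rw [map_sub] at h
    linarith
  -- greedy choice of a vertex not decreasing φ
  have hgreedy : ∀ y : Fin n → ℝ, ∃ j, φ y ≤ φ (A j *ᵥ y) := by
    intro y
    by_contra hcon2
    push_neg at hcon2
    obtain ⟨j₀, hj₀⟩ : ∃ j₀, 0 < u j₀ := by
      by_contra hall
      push_neg at hall
      have hz : ∀ i, u i = 0 := fun i => le_antisymm (hall i) (hu.1 i)
      have hls := hu.2
      rw [Finset.sum_congr rfl fun i _ => hz i, Finset.sum_const, smul_zero] at hls
      norm_num at hls
    have hsum : ∑ i, u i * φ (A i *ᵥ y) = φ y := by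
      rw [← hφinv y, amix_mulVec, map_sum]
      exact Finset.sum_congr rfl fun i _ => by rw [_root_.map_smul, smul_eq_mul]
    have hlt : ∑ i, u i * φ (A i *ᵥ y) < ∑ i, u i * φ y := by
      apply Finset.sum_lt_sum
      · intro i _
        exact mul_le_mul_of_nonneg_left (le_of_lt (hcon2 i)) (hu.1 i)
      · exact ⟨j₀, Finset.mem_univ _, mul_lt_mul_of_pos_left (hcon2 j₀) hj₀⟩
    rw [hsum, ← Finset.sum_mul, hu.2, one_mul] at hlt
    exact lt_irrefl _ hlt
  choose σ hσ using hgreedy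
  -- the greedy trajectory
  set z : ℕ → Fin n → ℝ :=
    fun k => Nat.rec (motive := fun _ => Fin n → ℝ) xbar (fun _ v => A (σ v) *ᵥ v) k with hz
  have hz0 : z 0 = xbar := rfl
  have hzstep : ∀ k, z (k + 1) = A (σ (z k)) *ᵥ z k := fun k => rfl
  have hzsol : IsInclusionSolution A z := by
    refine ⟨fun k => Pi.single (σ (z k)) 1, fun k => insimplex_single _, fun k => ?_⟩
    rw [amix_single]
  obtain ⟨L, hL⟩ := hweak z hzsol
  have hφz : ∀ k, 1 ≤ φ (z k) := by
    intro k
    induction k with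
    | zero => rw [hz0, hφxbar]
    | succ k ih =>
      calc (1:ℝ) ≤ φ (z k) := ih
        _ ≤ φ (A (σ (z k)) *ᵥ z k) := hσ (z k)
        _ = φ (z (k + 1)) := by rw [hzstep]
  -- pigeonhole: some vertex is used infinitely often
  have hfreq : ∃ j, ∃ᶠ k in atTop, σ (z k) = j := by
    by_contra hcon3
    push_neg at hcon3
    have hev : ∀ j : Fin M, ∀ᶠ k in atTop, σ (z k) ≠ j := fun j =>
      (hcon3 j)
    have hall : ∀ᶠ k in atTop, ∀ j, σ (z k) ≠ j := eventually_all.mpr hev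
    obtain ⟨k, hk⟩ := hall.exists
    exact hk (σ (z k)) rfl
  obtain ⟨j0, hj0⟩ := hfreq
  obtain ⟨ψ2, hψ2, hψ2p⟩ := Filter.extraction_of_frequently_atTop hj0
  have hL1 : Tendsto (fun t => z (ψ2 t)) atTop (nhds L) := hL.comp hψ2.tendsto_atTop
  have hL2 : Tendsto (fun t => z (ψ2 t + 1)) atTop (nhds L) :=
    hL.comp ((tendsto_add_atTop_nat 1).comp hψ2.tendsto_atTop)
  have hL3 : Tendsto (fun t => A j0 *ᵥ z (ψ2 t)) atTop (nhds (A j0 *ᵥ L)) :=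
    ((mulVec_continuous (A j0)).tendsto L).comp hL1
  have heq : (fun t => z (ψ2 t + 1)) = fun t => A j0 *ᵥ z (ψ2 t) :=
    funext fun t => by rw [hzstep, hψ2p t]
  have hfixL : A j0 *ᵥ L = L := tendsto_nhds_unique hL3 (heq ▸ hL2)
  -- hence L ∈ K, so φ L = 0, contradicting φ L ≥ 1
  have hLK : L ∈ K := by
    have h : L ∈ LinearMap.ker (A j0 - 1).mulVecLin := by
      simp [LinearMap.mem_ker, Matrix.mulVecLin_apply, Matrix.sub_mulVec,
        Matrix.one_mulVec, hfixL, sub_self]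
    rw [hKSP j0] at h
    exact h
  have hφL0 : φ L = 0 := hφW L (Submodule.mem_sup_left hLK)
  have hφcont : Continuous φ := LinearMap.continuous_of_finiteDimensional φ
  have htend : Tendsto (fun k => φ (z k)) atTop (nhds (φ L)) := (hφcont.tendsto L).comp hL
  have hge : (1:ℝ) ≤ φ L := ge_of_tendsto' htend hφz
  linarith
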